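/- Let P and Q be probability measures on a measurable space (Ω, 𝓕) with P absolutely continuous with respect to Q and with Radon–Nikodym derivative dP/dQ square-integrable with respect to Q. Then the χ² divergence admits the dual (variational) representation χ²(P,Q) = sup_f ( ∫ f dP − ∫ (f + f²/4) dQ ), where the supremum is taken over all measurable functions f : Ω → ℝ for which ∫ f dP and ∫ (f + f²/4) dQ are finite. -/

import Mathlib

open MeasureTheory

/-- For probability measures `P ≪ Q` with square-integrable Radon–Nikodym
derivative, the χ² divergence `χ²(P,Q) = ∫ (dP/dQ)² dQ − 1` admits the dual representation
`χ²(P,Q) = sup_f ( ∫ f dP − ∫ (f + f²/4) dQ )`, the supremum over all measurable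
`f : Ω → ℝ` with finite (i.e. integrable) `∫ f dP` and `∫ (f + f²/4) dQ`. -/
theorem chiSq_dual_representation {Ω : Type*} [MeasurableSpace Ω]
    (P Q : Measure Ω) [IsProbabilityMeasure P] [IsProbabilityMeasure Q]
    (hPQ : P ≪ Q)
    (hr2 : Integrable (fun ω => ((P.rnDeriv Q ω).toReal) ^ 2) Q) :
    ∫ ω, ((P.rnDeriv Q ω).toReal) ^ 2 ∂Q - 1 =
      sSup { c : ℝ | ∃ f : Ω → ℝ, Measurable f ∧ Integrable f P ∧
        Integrable (fun ω => f ω + (f ω) ^ 2 / 4) Q ∧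
        c = ∫ ω, f ω ∂P - ∫ ω, (f ω + (f ω) ^ 2 / 4) ∂Q } := by
  set r : Ω → ℝ := fun ω => ((P.rnDeriv Q ω).toReal) with hrdef
  have hrmeas : Measurable r := (Measure.measurable_rnDeriv P Q).ennreal_toReal
  have hr1 : Integrable r Q := Measure.integrable_toReal_rnDeriv
  have hint_r : ∫ ω, r ω ∂Q = 1 := by
    rw [hrdef, Measure.integral_toReal_rnDeriv hPQ]; simp
  set M : ℝ := ∫ ω, (r ω) ^ 2 ∂Q - 1 with hM
  set S : Set ℝ := { c : ℝ | ∃ f : Ω → ℝ, Measurable f ∧ Integrable f P ∧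
        Integrable (fun ω => f ω + (f ω) ^ 2 / 4) Q ∧
        c = ∫ ω, f ω ∂P - ∫ ω, (f ω + (f ω) ^ 2 / 4) ∂Q } with hS
  -- every element of S is ≤ M
  have hub : ∀ c ∈ S, c ≤ M := by
    rintro c ⟨f, hfmeas, hfP, hfQ, rfl⟩
    have hfQ' : Integrable (fun ω => r ω • f ω) Q :=
      (integrable_rnDeriv_smul_iff hPQ).mpr hfP
    have hint : ∫ ω, f ω ∂P = ∫ ω, r ω • f ω ∂Q :=
      (integral_rnDeriv_smul hPQ).symm
    rw [hint, ← integral_sub hfQ' hfQ]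
    have hsq : Integrable (fun ω => (r ω - 1) ^ 2) Q := by
      have : (fun ω => (r ω - 1) ^ 2) = fun ω => (r ω) ^ 2 - 2 * r ω + 1 := by
        funext ω; ring
      rw [this]
      exact (hr2.sub (hr1.const_mul 2)).add (integrable_const 1)
    have hmono : ∫ ω, (r ω • f ω - (f ω + (f ω) ^ 2 / 4)) ∂Q ≤
        ∫ ω, (r ω - 1) ^ 2 ∂Q := by
      refine integral_mono (hfQ'.sub hfQ) hsq (fun ω => ?_)
      simp only [smul_eq_mul]
      nlinarith [sq_nonneg (f ω / 2 - (r ω - 1))]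
    refine hmono.trans_eq ?_
    have heq : (fun ω => (r ω - 1) ^ 2) = fun ω => (r ω) ^ 2 - 2 * r ω + 1 := by
      funext ω; ring
    have hA : Integrable (fun ω => (r ω) ^ 2 - 2 * r ω) Q := hr2.sub (hr1.const_mul 2)
    rw [heq, integral_add hA (integrable_const 1),
      integral_sub hr2 (hr1.const_mul 2), integral_const_mul, hint_r]
    simp only [hM, hrdef, integral_const, measure_univ, probReal_univ, ENNReal.toReal_one, smul_eq_mul, one_mul,
      mul_one]
    ring
  -- M is attained by f₀ = 2r - 2
  have hmem : M ∈ S := by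
    refine ⟨fun ω => 2 * r ω - 2, (hrmeas.const_mul 2).sub measurable_const, ?_, ?_, ?_⟩
    · rw [← integrable_rnDeriv_smul_iff hPQ]
      have : (fun ω => r ω • (2 * r ω - 2)) = fun ω => 2 * (r ω) ^ 2 - 2 * r ω := by
        funext ω; simp [smul_eq_mul]; ring
      rw [this]
      exact (hr2.const_mul 2).sub (hr1.const_mul 2)
    · have : (fun ω => (2 * r ω - 2) + (2 * r ω - 2) ^ 2 / 4) =
          fun ω => (r ω) ^ 2 - 1 := by funext ω; ring
      rw [this]
      exact hr2.sub (integrable_const 1)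
    · have h1 : ∫ ω, (2 * r ω - 2) ∂P = 2 * ∫ ω, (r ω) ^ 2 ∂Q - 2 := by
        rw [← integral_rnDeriv_smul hPQ (f := fun ω => 2 * r ω - 2)]
        have : (fun ω => r ω • (2 * r ω - 2)) = fun ω => 2 * (r ω) ^ 2 - 2 * r ω := by
          funext ω; simp [smul_eq_mul]; ring
        have hA : Integrable (fun ω => 2 * (r ω) ^ 2) Q := hr2.const_mul 2
        have hB : Integrable (fun ω => 2 * r ω) Q := hr1.const_mul 2
        rw [this, integral_sub hA hB, integral_const_mul, integral_const_mul, hint_r]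
        ring
      have h2 : ∫ ω, ((2 * r ω - 2) + (2 * r ω - 2) ^ 2 / 4) ∂Q =
          ∫ ω, (r ω) ^ 2 ∂Q - 1 := by
        have : (fun ω => (2 * r ω - 2) + (2 * r ω - 2) ^ 2 / 4) =
            fun ω => (r ω) ^ 2 - 1 := by funext ω; ring
        rw [this, integral_sub hr2 (integrable_const 1)]
        simp
        rfl
      rw [h1, h2, hM]; ring
  exact le_antisymm (le_csSup ⟨M, hub⟩ hmem) (csSup_le ⟨M, hmem⟩ hub)
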